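/- (Multi-letter converse inequality for Class I, single-user rate; key step in the proof of Theorem 2.) Let N be a positive integer and ε ≥ 0. Let M, W_1, …, W_N, Y_1, …, Y_N be random variables with values in finite sets such that (i) for every n ∈ {1,…,N}, W_n is independent of the pair (M, (W_{n+1},…,W_N)), and (ii) H(M | Y_1,…,Y_N) ≤ N ε (Fano-type condition). For each n define the auxiliary random variable V_n = (M, W_{n+1},…,W_N, Y_1,…,Y_{n−1}). Then H(M) ≤ Σ_{n=1}^N [ I(V_n; Y_n) − I(V_n; W_n) ] + N ε. -/

import Mathlib

open scoped Classical BigOperators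
open Real

noncomputable section

/-- `p` is a probability mass function on a finite type. -/
def IsPMF {α : Type*} [Fintype α] (p : α → ℝ) : Prop :=
  (∀ a, 0 ≤ p a) ∧ ∑ a, p a = 1

/-- Base-2 Shannon entropy of a pmf on a finite type. -/
def entPMF {α : Type*} [Fintype α] (p : α → ℝ) : ℝ :=
  ∑ a, -(p a * Real.logb 2 (p a))

/-- Distribution (pushforward pmf) of a random variable `X` under the pmf `p`. -/
def distRV {Ω α : Type*} [Fintype Ω] (p : Ω → ℝ) (X : Ω → α) : α → ℝ :=
  fun a => ∑ ω, if X ω = a then p ω else 0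

/-- Shannon entropy `H(X)` of a random variable (base 2). -/
def entRV {Ω α : Type*} [Fintype Ω] [Fintype α] (p : Ω → ℝ) (X : Ω → α) : ℝ :=
  entPMF (distRV p X)

/-- Conditional entropy `H(X|Y)` (base 2). -/
def condEnt {Ω α β : Type*} [Fintype Ω] [Fintype α] [Fintype β]
    (p : Ω → ℝ) (X : Ω → α) (Y : Ω → β) : ℝ :=
  entRV p (fun ω => (X ω, Y ω)) - entRV p Y

/-- Mutual information `I(X;Y)` (base 2). -/
def mutInfo {Ω α β : Type*} [Fintype Ω] [Fintype α] [Fintype β]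
    (p : Ω → ℝ) (X : Ω → α) (Y : Ω → β) : ℝ :=
  entRV p X + entRV p Y - entRV p (fun ω => (X ω, Y ω))

/-- Conditional mutual information `I(X;Y|Z)` (base 2). -/
def condMutInfo {Ω α β γ : Type*} [Fintype Ω] [Fintype α] [Fintype β] [Fintype γ]
    (p : Ω → ℝ) (X : Ω → α) (Y : Ω → β) (Z : Ω → γ) : ℝ :=
  entRV p (fun ω => (X ω, Z ω)) + entRV p (fun ω => (Y ω, Z ω))
    - entRV p (fun ω => (X ω, Y ω, Z ω)) - entRV p Z

/-- Independence of two random variables under the pmf `p`. -/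
def IndepRV {Ω α β : Type*} [Fintype Ω] (p : Ω → ℝ) (X : Ω → α) (Y : Ω → β) : Prop :=
  ∀ a b, distRV p (fun ω => (X ω, Y ω)) (a, b) = distRV p X a * distRV p Y b

/-- The auxiliary random variable `V_n = (M, W_{n+1}^N, Y^{n-1})`. -/
def auxV8 {Ω μ 𝒲 𝒴 : Type} {N : ℕ} (M : Ω → μ) (W : Fin N → Ω → 𝒲)
    (Y : Fin N → Ω → 𝒴) (n : Fin N) (ω : Ω) :
    μ × ({k : Fin N // n < k} → 𝒲) × ({k : Fin N // k < n} → 𝒴) :=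
  (M ω, fun k => W k ω, fun k => Y k ω)

section Helpers

variable {Ω α β : Type*} [Fintype Ω] [Fintype α] [Fintype β]

lemma sum_distRV (p : Ω → ℝ) (X : Ω → α) : ∑ a, distRV p X a = ∑ ω, p ω := by
  unfold distRV
  rw [Finset.sum_comm]
  apply Finset.sum_congr rfl
  intro ω _
  simp [Finset.sum_ite_eq]

lemma distRV_nonneg (p : Ω → ℝ) (hp : ∀ ω, 0 ≤ p ω) (X : Ω → α) (a : α) :
    0 ≤ distRV p X a := by
  apply Finset.sum_nonneg
  intro ω _
  split <;> simp [hp ω]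

lemma distRV_fst (p : Ω → ℝ) (X : Ω → α) (Z : Ω → β) (a : α) :
    ∑ b, distRV p (fun ω => (X ω, Z ω)) (a, b) = distRV p X a := by
  unfold distRV
  rw [Finset.sum_comm]
  apply Finset.sum_congr rfl
  intro ω _
  by_cases h : X ω = a
  · simp [h, Prod.mk.injEq, Finset.sum_ite_eq]
  · simp [h, Prod.mk.injEq]

lemma distRV_snd (p : Ω → ℝ) (X : Ω → α) (Z : Ω → β) (b : β) :
    ∑ a, distRV p (fun ω => (X ω, Z ω)) (a, b) = distRV p Z b := by
  unfold distRV
  rw [Finset.sum_comm]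
  apply Finset.sum_congr rfl
  intro ω _
  by_cases h : Z ω = b
  · simp [h, Prod.mk.injEq, Finset.sum_ite_eq]
  · simp [h, Prod.mk.injEq]

lemma entRV_eq_of_leftInv (p : Ω → ℝ) (Xa : Ω → α) (Xb : Ω → β)
    (f : α → β) (g : β → α) (hgf : ∀ a, g (f a) = a) (h : ∀ ω, Xb ω = f (Xa ω)) :
    entRV p Xb = entRV p Xa := by
  have hf : Function.Injective f := Function.LeftInverse.injective hgf
  have key : ∀ a, distRV p Xb (f a) = distRV p Xa a := by
    intro a
    unfold distRV
    apply Finset.sum_congr rfl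
    intro ω _
    simp [h ω, hf.eq_iff]
  have hzero : ∀ b, b ∉ Finset.image f Finset.univ → distRV p Xb b = 0 := by
    intro b hb
    apply Finset.sum_eq_zero
    intro ω _
    rw [if_neg]
    intro hx
    exact hb (hx ▸ (h ω) ▸ Finset.mem_image_of_mem f (Finset.mem_univ (Xa ω)))
  show entPMF (distRV p Xb) = entPMF (distRV p Xa)
  unfold entPMF
  calc ∑ b, -(distRV p Xb b * Real.logb 2 (distRV p Xb b))
      = ∑ b ∈ Finset.image f Finset.univ,
          -(distRV p Xb b * Real.logb 2 (distRV p Xb b)) := by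
        refine (Finset.sum_subset (Finset.subset_univ _) ?_).symm
        intro b _ hb
        rw [hzero b hb]
        simp
    _ = ∑ a, -(distRV p Xb (f a) * Real.logb 2 (distRV p Xb (f a))) :=
        Finset.sum_image (by intro a _ a' _ hh; exact hf hh)
    _ = ∑ a, -(distRV p Xa a * Real.logb 2 (distRV p Xa a)) := by
        apply Finset.sum_congr rfl
        intro a _
        rw [key a]

lemma entRV_const (p : Ω → ℝ) (h1 : ∑ ω, p ω = 1) (c : α) (X : Ω → α)
    (h : ∀ ω, X ω = c) : entRV p X = 0 := by
  show entPMF (distRV p X) = 0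
  unfold entPMF
  apply Finset.sum_eq_zero
  intro a _
  have hd : distRV p X a = if c = a then 1 else 0 := by
    unfold distRV
    by_cases hc : c = a
    · simp only [h, hc, if_pos rfl, if_true]
      simpa using h1
    · simp [h, hc]
  rw [hd]
  by_cases hc : c = a <;> simp [hc]

end Helpers

section Helpers2

variable {Ω α β : Type*} [Fintype Ω] [Fintype α] [Fintype β]

lemma gibbs_point (r x y : ℝ) (hr : 0 ≤ r) (hy : 0 ≤ y) (hrx : r ≤ x) (hry : r ≤ y) :
    (r - x * y) / Real.log 2 ≤
      (-(r * Real.logb 2 x) + -(r * Real.logb 2 y)) - -(r * Real.logb 2 r) := by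
  have hlog2 : 0 < Real.log 2 := Real.log_pos one_lt_two
  rcases eq_or_lt_of_le hr with heq | hrpos
  · rw [← heq]
    simp only [zero_mul, neg_zero, zero_sub, add_zero, sub_zero, zero_add]
    have hx0 : 0 ≤ x := le_trans hr hrx
    exact div_nonpos_of_nonpos_of_nonneg (by nlinarith) hlog2.le
  · have hx : 0 < x := lt_of_lt_of_le hrpos hrx
    have hy' : 0 < y := lt_of_lt_of_le hrpos hry
    have h1 := Real.log_le_sub_one_of_pos (show 0 < x * y / r by positivity)
    rw [Real.log_div (by positivity) (ne_of_gt hrpos), Real.log_mul (ne_of_gt hx) (ne_of_gt hy')] at h1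
    have h3 : r * (x * y / r - 1) = x * y - r := by field_simp
    have h2 : r * (Real.log x + Real.log y - Real.log r) ≤ x * y - r := by
      have := mul_le_mul_of_nonneg_left h1 hrpos.le
      linarith [this, h3.symm ▸ this]
    have h4 : r - x * y ≤ r * Real.log r - r * Real.log x - r * Real.log y := by nlinarith
    calc (r - x * y) / Real.log 2
        ≤ (r * Real.log r - r * Real.log x - r * Real.log y) / Real.log 2 := by
          exact div_le_div_of_nonneg_right h4 hlog2.le |>.trans_eq rfl
      _ = (-(r * Real.logb 2 x) + -(r * Real.logb 2 y)) - -(r * Real.logb 2 r) := by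
          unfold Real.logb
          ring

lemma entRV_pair_of_indep (p : Ω → ℝ) (hp : IsPMF p) (X : Ω → α) (Z : Ω → β)
    (h : IndepRV p X Z) :
    entRV p (fun ω => (X ω, Z ω)) = entRV p X + entRV p Z := by
  have hsX : ∑ a, distRV p X a = 1 := by rw [sum_distRV]; exact hp.2
  have hsZ : ∑ b, distRV p Z b = 1 := by rw [sum_distRV]; exact hp.2
  have point : ∀ x y : ℝ, -((x * y) * Real.logb 2 (x * y)) =
      y * -(x * Real.logb 2 x) + x * -(y * Real.logb 2 y) := by
    intro x y
    rcases eq_or_ne x 0 with rfl | hx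
    · simp
    rcases eq_or_ne y 0 with rfl | hy
    · simp
    rw [Real.logb, Real.logb, Real.logb, Real.log_mul hx hy]
    ring
  show entPMF (distRV p (fun ω => (X ω, Z ω))) = entPMF (distRV p X) + entPMF (distRV p Z)
  unfold entPMF
  rw [Fintype.sum_prod_type]
  calc ∑ a, ∑ b, -(distRV p (fun ω => (X ω, Z ω)) (a, b) *
          Real.logb 2 (distRV p (fun ω => (X ω, Z ω)) (a, b)))
      = ∑ a, ∑ b, (distRV p Z b * -(distRV p X a * Real.logb 2 (distRV p X a))
          + distRV p X a * -(distRV p Z b * Real.logb 2 (distRV p Z b))) := by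
        apply Finset.sum_congr rfl; intro a _
        apply Finset.sum_congr rfl; intro b _
        rw [h a b]; exact point _ _
    _ = ∑ a, ((∑ b, distRV p Z b) * -(distRV p X a * Real.logb 2 (distRV p X a))
          + distRV p X a * ∑ b, -(distRV p Z b * Real.logb 2 (distRV p Z b))) := by
        apply Finset.sum_congr rfl; intro a _
        rw [Finset.sum_add_distrib, ← Finset.sum_mul, ← Finset.mul_sum]
    _ = ∑ a, (-(distRV p X a * Real.logb 2 (distRV p X a))
          + distRV p X a * ∑ b, -(distRV p Z b * Real.logb 2 (distRV p Z b))) := by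
        apply Finset.sum_congr rfl; intro a _
        rw [hsZ, one_mul]
    _ = ∑ a, -(distRV p X a * Real.logb 2 (distRV p X a))
          + (∑ a, distRV p X a) * ∑ b, -(distRV p Z b * Real.logb 2 (distRV p Z b)) := by
        rw [Finset.sum_add_distrib, ← Finset.sum_mul]
    _ = _ := by rw [hsX, one_mul]

lemma ent_pair_le (p : Ω → ℝ) (hp : IsPMF p) (X : Ω → α) (Z : Ω → β) :
    entRV p (fun ω => (X ω, Z ω)) ≤ entRV p X + entRV p Z := by
  have hr0 : ∀ c : α × β, 0 ≤ distRV p (fun ω => (X ω, Z ω)) c :=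
    fun c => distRV_nonneg p hp.1 _ c
  have hmX : ∀ a, ∑ b, distRV p (fun ω => (X ω, Z ω)) (a, b) = distRV p X a :=
    distRV_fst p X Z
  have hmZ : ∀ b, ∑ a, distRV p (fun ω => (X ω, Z ω)) (a, b) = distRV p Z b :=
    distRV_snd p X Z
  have hrle1 : ∀ a b, distRV p (fun ω => (X ω, Z ω)) (a, b) ≤ distRV p X a := by
    intro a b
    rw [← hmX a]
    exact Finset.single_le_sum (fun b' _ => hr0 (a, b')) (Finset.mem_univ b)
  have hrle2 : ∀ a b, distRV p (fun ω => (X ω, Z ω)) (a, b) ≤ distRV p Z b := by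
    intro a b
    rw [← hmZ b]
    exact Finset.single_le_sum (fun a' _ => hr0 (a', b)) (Finset.mem_univ a)
  have hsr : ∑ a, ∑ b, distRV p (fun ω => (X ω, Z ω)) (a, b) = 1 := by
    rw [← Fintype.sum_prod_type, sum_distRV]; exact hp.2
  have hsX : ∑ a, distRV p X a = 1 := by rw [sum_distRV]; exact hp.2
  have hsZ : ∑ b, distRV p Z b = 1 := by rw [sum_distRV]; exact hp.2
  have hEX : entRV p X = ∑ a, ∑ b, -(distRV p (fun ω => (X ω, Z ω)) (a, b) *
      Real.logb 2 (distRV p X a)) := by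
    show entPMF (distRV p X) = _
    unfold entPMF
    apply Finset.sum_congr rfl; intro a _
    rw [Finset.sum_neg_distrib, ← Finset.sum_mul, hmX a]
  have hEZ : entRV p Z = ∑ a, ∑ b, -(distRV p (fun ω => (X ω, Z ω)) (a, b) *
      Real.logb 2 (distRV p Z b)) := by
    show entPMF (distRV p Z) = _
    unfold entPMF
    rw [Finset.sum_comm]
    apply Finset.sum_congr rfl; intro b _
    rw [Finset.sum_neg_distrib, ← Finset.sum_mul, hmZ b]
  have hEP : entRV p (fun ω => (X ω, Z ω)) = ∑ a, ∑ b,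
      -(distRV p (fun ω => (X ω, Z ω)) (a, b) *
        Real.logb 2 (distRV p (fun ω => (X ω, Z ω)) (a, b))) := by
    show entPMF _ = _
    unfold entPMF
    rw [Fintype.sum_prod_type]
  have hzero : ∑ a, ∑ b, (distRV p (fun ω => (X ω, Z ω)) (a, b)
      - distRV p X a * distRV p Z b) / Real.log 2 = 0 := by
    simp_rw [← Finset.sum_div, Finset.sum_sub_distrib]
    rw [hsr, ← Finset.sum_mul_sum, hsX, hsZ]
    simp
  have main : (0:ℝ) ≤ ∑ a, ∑ b,
      ((-(distRV p (fun ω => (X ω, Z ω)) (a, b) * Real.logb 2 (distRV p X a))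
        + -(distRV p (fun ω => (X ω, Z ω)) (a, b) * Real.logb 2 (distRV p Z b)))
        - -(distRV p (fun ω => (X ω, Z ω)) (a, b) *
            Real.logb 2 (distRV p (fun ω => (X ω, Z ω)) (a, b)))) := by
    rw [← hzero]
    apply Finset.sum_le_sum
    intro a _
    apply Finset.sum_le_sum
    intro b _
    exact gibbs_point _ _ _ (hr0 (a, b)) (le_trans (hr0 (a,b)) (hrle2 a b))
      (hrle1 a b) (hrle2 a b)
  simp_rw [Finset.sum_sub_distrib, Finset.sum_add_distrib] at main
  rw [hEP, hEX, hEZ]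
  linarith

end Helpers2

section Helpers3

variable {Ω 𝒴 : Type*} [Fintype Ω] [Fintype 𝒴]

lemma ent_tuple_le (p : Ω → ℝ) (hp : IsPMF p) :
    ∀ (N : ℕ) (Z : Fin N → Ω → 𝒴),
      entRV p (fun ω => fun n => Z n ω) ≤ ∑ n, entRV p (Z n)
  | 0, Z => by
      rw [entRV_const p hp.2 (fun i : Fin 0 => i.elim0) _
        (fun ω => funext fun i => i.elim0)]
      simp
  | (N + 1), Z => by
      have h1 : entRV p (fun ω => fun n : Fin (N + 1) => Z n ω) =
          entRV p (fun ω => (Z 0 ω, fun n : Fin N => Z n.succ ω)) := by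
        refine entRV_eq_of_leftInv p _ _
          (f := fun x : 𝒴 × (Fin N → 𝒴) => Fin.cons x.1 x.2)
          (g := fun t => (t 0, fun i => t i.succ)) ?_ ?_
        · rintro ⟨y, ys⟩
          simp
        · intro ω
          funext i
          refine Fin.cases ?_ ?_ i <;> simp
      rw [h1, Fin.sum_univ_succ]
      calc entRV p (fun ω => (Z 0 ω, fun n : Fin N => Z n.succ ω))
          ≤ entRV p (Z 0) + entRV p (fun ω => fun n : Fin N => Z n.succ ω) :=
            ent_pair_le p hp _ _
        _ ≤ entRV p (Z 0) + ∑ n : Fin N, entRV p (Z n.succ) :=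
            add_le_add (le_refl _) (ent_tuple_le p hp N _)

end Helpers3

section Helpers4

variable {Ω μ 𝒲 𝒴 : Type} [Fintype Ω] [Fintype μ] [Fintype 𝒲] [Fintype 𝒴]

/-- `H(M, W_m^N, Y^{m-1})`. -/
def Fm (p : Ω → ℝ) {N : ℕ} (M : Ω → μ) (W : Fin N → Ω → 𝒲) (Y : Fin N → Ω → 𝒴)
    (m : ℕ) : ℝ :=
  entRV p (fun ω => (M ω, fun k : {k : Fin N // m ≤ (k : ℕ)} => W k.1 ω,
    fun k : {k : Fin N // (k : ℕ) < m} => Y k.1 ω))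

/-- `H(M, W_m^N)`. -/
def Gm (p : Ω → ℝ) {N : ℕ} (M : Ω → μ) (W : Fin N → Ω → 𝒲) (m : ℕ) : ℝ :=
  entRV p (fun ω => (M ω, fun k : {k : Fin N // m ≤ (k : ℕ)} => W k.1 ω))

lemma Fm_eq_aux_W (p : Ω → ℝ) {N : ℕ} (M : Ω → μ) (W : Fin N → Ω → 𝒲)
    (Y : Fin N → Ω → 𝒴) (n : Fin N) :
    entRV p (fun ω => (auxV8 M W Y n ω, W n ω)) = Fm p M W Y (n : ℕ) := by
  unfold Fm
  refine (entRV_eq_of_leftInv p (fun ω => (auxV8 M W Y n ω, W n ω)) _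
    (f := fun x : (μ × ({k : Fin N // n < k} → 𝒲) × ({k : Fin N // k < n} → 𝒴)) × 𝒲 =>
      (x.1.1,
        fun k : {k : Fin N // (n : ℕ) ≤ (k : ℕ)} =>
          if h : n < k.1 then x.1.2.1 ⟨k.1, h⟩ else x.2,
        fun k : {k : Fin N // (k : ℕ) < (n : ℕ)} => x.1.2.2 ⟨k.1, k.2⟩))
    (g := fun y =>
      ((y.1, fun k : {k : Fin N // n < k} => y.2.1 ⟨k.1, le_of_lt k.2⟩,
        fun k : {k : Fin N // k < n} => y.2.2 ⟨k.1, k.2⟩),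
        y.2.1 ⟨n, le_refl _⟩))
    ?_ ?_).symm
  · rintro ⟨⟨m0, ws, ys⟩, w⟩
    refine congrArg₂ Prod.mk (congrArg₂ Prod.mk rfl (congrArg₂ Prod.mk ?_ ?_)) ?_
    · funext k
      exact dif_pos k.2
    · funext k
      rfl
    · exact dif_neg (lt_irrefl n)
  · intro ω
    unfold auxV8
    refine congrArg₂ Prod.mk rfl (congrArg₂ Prod.mk ?_ rfl)
    funext k
    by_cases h : n < k.1
    · rw [dif_pos h]
    · rw [dif_neg h]
      have hk : k.1 = n := Fin.ext (le_antisymm (Fin.not_lt.mp h) k.2)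
      rw [hk]

lemma Fm_eq_aux_Y (p : Ω → ℝ) {N : ℕ} (M : Ω → μ) (W : Fin N → Ω → 𝒲)
    (Y : Fin N → Ω → 𝒴) (n : Fin N) :
    entRV p (fun ω => (auxV8 M W Y n ω, Y n ω)) = Fm p M W Y ((n : ℕ) + 1) := by
  unfold Fm
  refine (entRV_eq_of_leftInv p (fun ω => (auxV8 M W Y n ω, Y n ω)) _
    (f := fun x : (μ × ({k : Fin N // n < k} → 𝒲) × ({k : Fin N // k < n} → 𝒴)) × 𝒴 =>
      (x.1.1,
        fun k : {k : Fin N // (n : ℕ) + 1 ≤ (k : ℕ)} => x.1.2.1 ⟨k.1, k.2⟩,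
        fun k : {k : Fin N // (k : ℕ) < (n : ℕ) + 1} =>
          if h : k.1 < n then x.1.2.2 ⟨k.1, h⟩ else x.2))
    (g := fun y =>
      ((y.1, fun k : {k : Fin N // n < k} => y.2.1 ⟨k.1, k.2⟩,
        fun k : {k : Fin N // k < n} => y.2.2 ⟨k.1, Nat.lt_succ_of_lt k.2⟩),
        y.2.2 ⟨n, Nat.lt_succ_self _⟩))
    ?_ ?_).symm
  · rintro ⟨⟨m0, ws, ys⟩, y⟩
    refine congrArg₂ Prod.mk (congrArg₂ Prod.mk rfl (congrArg₂ Prod.mk ?_ ?_)) ?_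
    · funext k
      rfl
    · funext k
      exact dif_pos k.2
    · exact dif_neg (lt_irrefl n)
  · intro ω
    unfold auxV8
    refine congrArg₂ Prod.mk rfl (congrArg₂ Prod.mk rfl ?_)
    funext k
    by_cases h : k.1 < n
    · rw [dif_pos h]
    · rw [dif_neg h]
      have hk : k.1 = n := Fin.ext (le_antisymm (Nat.lt_succ_iff.mp k.2) (Fin.not_lt.mp h))
      rw [hk]

lemma Fm_N (p : Ω → ℝ) {N : ℕ} (M : Ω → μ) (W : Fin N → Ω → 𝒲)
    (Y : Fin N → Ω → 𝒴) :
    Fm p M W Y N = entRV p (fun ω => (M ω, fun n : Fin N => Y n ω)) := by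
  unfold Fm
  refine entRV_eq_of_leftInv p (fun ω => (M ω, fun n : Fin N => Y n ω)) _
    (f := fun x : μ × (Fin N → 𝒴) =>
      (x.1, fun k : {k : Fin N // N ≤ (k : ℕ)} => absurd k.2 (not_le.mpr k.1.isLt),
        fun k : {k : Fin N // (k : ℕ) < N} => x.2 k.1))
    (g := fun y => (y.1, fun i : Fin N => y.2.2 ⟨i, i.isLt⟩))
    ?_ ?_
  · rintro ⟨m0, yt⟩
    rfl
  · intro ω
    refine congrArg₂ Prod.mk rfl (congrArg₂ Prod.mk ?_ rfl)
    funext k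
    exact absurd k.2 (not_le.mpr k.1.isLt)

lemma Fm_zero (p : Ω → ℝ) {N : ℕ} (M : Ω → μ) (W : Fin N → Ω → 𝒲)
    (Y : Fin N → Ω → 𝒴) :
    Fm p M W Y 0 = Gm p M W 0 := by
  unfold Fm Gm
  refine entRV_eq_of_leftInv p
    (fun ω => (M ω, fun k : {k : Fin N // 0 ≤ (k : ℕ)} => W k.1 ω)) _
    (f := fun x : μ × ({k : Fin N // 0 ≤ (k : ℕ)} → 𝒲) =>
      (x.1, x.2, fun k : {k : Fin N // (k : ℕ) < 0} => absurd k.2 (Nat.not_lt_zero _)))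
    (g := fun y => (y.1, y.2.1))
    ?_ ?_
  · rintro ⟨m0, ws⟩
    rfl
  · intro ω
    refine congrArg₂ Prod.mk rfl (congrArg₂ Prod.mk rfl ?_)
    funext k
    exact absurd k.2 (Nat.not_lt_zero _)

lemma Gm_N (p : Ω → ℝ) {N : ℕ} (M : Ω → μ) (W : Fin N → Ω → 𝒲) :
    Gm p M W N = entRV p M := by
  unfold Gm
  refine entRV_eq_of_leftInv p M _
    (f := fun m0 : μ =>
      (m0, fun k : {k : Fin N // N ≤ (k : ℕ)} => absurd k.2 (not_le.mpr k.1.isLt)))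
    (g := Prod.fst) ?_ ?_
  · intro a
    rfl
  · intro ω
    refine congrArg₂ Prod.mk rfl ?_
    funext k
    exact absurd k.2 (not_le.mpr k.1.isLt)

lemma Gm_step (p : Ω → ℝ) (hp : IsPMF p) {N : ℕ} (M : Ω → μ) (W : Fin N → Ω → 𝒲)
    (m : ℕ) (hm : m < N)
    (h : IndepRV p (W ⟨m, hm⟩)
      (fun ω => (M ω, fun k : {k : Fin N // (⟨m, hm⟩ : Fin N) < k} => W k.1 ω))) :
    Gm p M W m = entRV p (W ⟨m, hm⟩) + Gm p M W (m + 1) := by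
  have h1 := entRV_pair_of_indep p hp (W ⟨m, hm⟩)
    (fun ω => (M ω, fun k : {k : Fin N // (⟨m, hm⟩ : Fin N) < k} => W k.1 ω)) h
  have h2 : Gm p M W m = entRV p (fun ω => (W ⟨m, hm⟩ ω,
      (M ω, fun k : {k : Fin N // (⟨m, hm⟩ : Fin N) < k} => W k.1 ω))) := by
    unfold Gm
    refine entRV_eq_of_leftInv p
      (fun ω => (W ⟨m, hm⟩ ω,
        (M ω, fun k : {k : Fin N // (⟨m, hm⟩ : Fin N) < k} => W k.1 ω))) _
      (f := fun x : 𝒲 × (μ × ({k : Fin N // (⟨m, hm⟩ : Fin N) < k} → 𝒲)) =>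
        (x.2.1, fun k : {k : Fin N // m ≤ (k : ℕ)} =>
          if hk : (⟨m, hm⟩ : Fin N) < k.1 then x.2.2 ⟨k.1, hk⟩ else x.1))
      (g := fun y =>
        (y.2 ⟨⟨m, hm⟩, le_refl _⟩,
          (y.1, fun k : {k : Fin N // (⟨m, hm⟩ : Fin N) < k} =>
            y.2 ⟨k.1, le_of_lt k.2⟩)))
      ?_ ?_
    · rintro ⟨w, m0, ws⟩
      refine congrArg₂ Prod.mk ?_ (congrArg₂ Prod.mk rfl ?_)
      · exact dif_neg (lt_irrefl _)
      · funext k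
        exact dif_pos k.2
    · intro ω
      refine congrArg₂ Prod.mk rfl ?_
      funext k
      by_cases hk : (⟨m, hm⟩ : Fin N) < k.1
      · rw [dif_pos hk]
      · rw [dif_neg hk]
        have hkm : k.1 = ⟨m, hm⟩ := Fin.ext (le_antisymm (Fin.not_lt.mp hk) k.2)
        rw [hkm]
  have h3 : entRV p (fun ω => (M ω,
      fun k : {k : Fin N // (⟨m, hm⟩ : Fin N) < k} => W k.1 ω)) = Gm p M W (m + 1) := by
    unfold Gm
    exact (entRV_eq_of_leftInv p
      (fun ω => (M ω, fun k : {k : Fin N // (⟨m, hm⟩ : Fin N) < k} => W k.1 ω)) _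
      (f := fun x : μ × ({k : Fin N // (⟨m, hm⟩ : Fin N) < k} → 𝒲) =>
        (x.1, fun k : {k : Fin N // m + 1 ≤ (k : ℕ)} => x.2 ⟨k.1, k.2⟩))
      (g := fun y => (y.1, fun k : {k : Fin N // (⟨m, hm⟩ : Fin N) < k} =>
        y.2 ⟨k.1, k.2⟩))
      (fun a => rfl) (fun ω => rfl)).symm
  rw [h2, h1, h3]

end Helpers4

/-- **Multi-letter converse inequality for Class I (single-user rate; key step in
the proof of Theorem 2).** If each `W_n` is independent of
`(M, W_{n+1},…,W_N)` and `H(M | Y^N) ≤ N ε`, then with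
`V_n = (M, W_{n+1}^N, Y^{n-1})` one has
`H(M) ≤ Σ_n [ I(V_n;Y_n) − I(V_n;W_n) ] + N ε`. -/
theorem classI_multiletter_converse {Ω μ 𝒲 𝒴 : Type}
    [Fintype Ω] [Fintype μ] [Fintype 𝒲] [Fintype 𝒴]
    (p : Ω → ℝ) (hp : IsPMF p) (N : ℕ) (hN : 0 < N) (ε : ℝ) (hε : 0 ≤ ε)
    (M : Ω → μ) (W : Fin N → Ω → 𝒲) (Y : Fin N → Ω → 𝒴)
    (hindep : ∀ n : Fin N,
      IndepRV p (W n) (fun ω => (M ω, fun k : {k : Fin N // n < k} => W k ω)))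
    (hFano : condEnt p M (fun ω => fun n : Fin N => Y n ω) ≤ (N : ℝ) * ε) :
    entRV p M ≤
      (∑ n : Fin N,
        (mutInfo p (auxV8 M W Y n) (Y n) - mutInfo p (auxV8 M W Y n) (W n)))
      + (N : ℝ) * ε := by
  classical
  -- H(M, W^N) = H(M) + ∑ H(W_n)
  have key : ∀ (j m : ℕ), m + j = N →
      Gm p M W m = entRV p M +
        ∑ n ∈ Finset.univ.filter (fun n : Fin N => m ≤ (n : ℕ)), entRV p (W n) := by
    intro j
    induction j with
    | zero =>
      intro m hm
      have hmN : m = N := by omega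
      have hfil : Finset.univ.filter (fun n : Fin N => N ≤ (n : ℕ)) = ∅ :=
        Finset.filter_false_of_mem (fun n _ => not_le.mpr n.isLt)
      rw [hmN, Gm_N, hfil]
      simp
    | succ j ih =>
      intro m hm
      have hmN : m < N := by omega
      rw [Gm_step p hp M W m hmN (hindep ⟨m, hmN⟩), ih (m + 1) (by omega)]
      have hfil : Finset.univ.filter (fun n : Fin N => m + 1 ≤ (n : ℕ)) =
          (Finset.univ.filter (fun n : Fin N => m ≤ (n : ℕ))).erase ⟨m, hmN⟩ := by
        ext k
        simp only [Finset.mem_filter, Finset.mem_erase, Finset.mem_univ, true_and, ne_eq,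
          Fin.ext_iff, Fin.val_mk]
        omega
      rw [hfil, ← Finset.add_sum_erase _ _
        (show (⟨m, hmN⟩ : Fin N) ∈ Finset.univ.filter (fun n : Fin N => m ≤ (n : ℕ)) by
          simp)]
      ring
  have hGW : Gm p M W 0 = entRV p M + ∑ n : Fin N, entRV p (W n) := by
    rw [key N 0 (by omega)]
    congr 1
    apply Finset.sum_congr _ (fun _ _ => rfl)
    rw [Finset.filter_true_of_mem (fun n _ => Nat.zero_le _)]
  -- rewrite each summand
  have hterm : ∀ n : Fin N,
      mutInfo p (auxV8 M W Y n) (Y n) - mutInfo p (auxV8 M W Y n) (W n) =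
        (entRV p (Y n) - entRV p (W n)) +
          (Fm p M W Y (n : ℕ) - Fm p M W Y ((n : ℕ) + 1)) := by
    intro n
    unfold mutInfo
    rw [Fm_eq_aux_W p M W Y n, Fm_eq_aux_Y p M W Y n]
    ring
  rw [Finset.sum_congr rfl (fun n _ => hterm n), Finset.sum_add_distrib]
  have htel : ∑ n : Fin N, (Fm p M W Y (n : ℕ) - Fm p M W Y ((n : ℕ) + 1)) =
      Fm p M W Y 0 - Fm p M W Y N := by
    rw [Fin.sum_univ_eq_sum_range (fun i => Fm p M W Y i - Fm p M W Y (i + 1)) N]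
    exact Finset.sum_range_sub' (fun i => Fm p M W Y i) N
  rw [htel]
  have h0 : Fm p M W Y 0 = entRV p M + ∑ n : Fin N, entRV p (W n) :=
    (Fm_zero p M W Y).trans hGW
  have hNN : Fm p M W Y N = entRV p (fun ω => (M ω, fun n : Fin N => Y n ω)) :=
    Fm_N p M W Y
  have hfano : entRV p (fun ω => (M ω, fun n : Fin N => Y n ω)) -
      entRV p (fun ω => fun n : Fin N => Y n ω) ≤ (N : ℝ) * ε := hFano
  have hsub : entRV p (fun ω => fun n : Fin N => Y n ω) ≤ ∑ n : Fin N, entRV p (Y n) :=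
    ent_tuple_le p hp N Y
  have hsplit : ∑ n : Fin N, (entRV p (Y n) - entRV p (W n)) =
      ∑ n : Fin N, entRV p (Y n) - ∑ n : Fin N, entRV p (W n) :=
    Finset.sum_sub_distrib _ _
  linarith
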